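/- Let E(t) := { X ∈ [-1/2,1/2]^{mn} : there exists q ∈ ℤᵐ \ {0} with |q|_∞ < 2ᵗ/ω(t) and |qX|_∞ < m·(2ᵗ)^{-m/n+1} }, where m > n and ω is increasing with ω(t) → ∞. Then the mn-dimensional Lebesgue measure of E(t) is ≪ ω(t)^{-(m−n)}, and in particular tends to 0 as t → ∞. -/

import Mathlib

open MeasureTheory Filter

noncomputable def qnorm {m : ℕ} (q : Fin m → ℤ) : ℝ := ‖(fun i => (q i : ℝ) : Fin m → ℝ)‖

def cube (m n : ℕ) : Set (Fin m → Fin n → ℝ) :=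
  {X | ∀ i j, X i j ∈ Set.Icc (-(1/2) : ℝ) (1/2)}

def W0 (m n : ℕ) (ψ : ℝ → ℝ) : Set (Fin m → Fin n → ℝ) :=
  {X | X ∈ cube m n ∧
    {q : Fin m → ℤ | q ≠ 0 ∧
      ‖(fun j => ∑ i, (q i : ℝ) * X i j : Fin n → ℝ)‖ < ψ (qnorm q)}.Infinite}

noncomputable def Hf {α : Type*} [EMetricSpace α] [MeasurableSpace α] [BorelSpace α]
    (f : ℝ → ℝ) : Measure α :=
  Measure.mkMetric (fun d => ENNReal.ofReal (f d.toReal))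
def Eset (m n : ℕ) (ω : ℕ → ℝ) (t : ℕ) : Set (Fin m → Fin n → ℝ) :=
  {X | X ∈ cube m n ∧ ∃ q : Fin m → ℤ, q ≠ 0 ∧ qnorm q < 2 ^ t / ω t ∧
    ‖(fun j => ∑ i, (q i : ℝ) * X i j : Fin n → ℝ)‖ <
      m * ((2 : ℝ) ^ t) ^ (-(m : ℝ) / n + 1)}

noncomputable def qn {m : ℕ} (q : Fin m → ℤ) : ℕ := Finset.univ.sup fun i => (q i).natAbs

lemma le_qn {m : ℕ} (q : Fin m → ℤ) (i : Fin m) : (q i).natAbs ≤ qn q :=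
  by unfold qn; exact Finset.le_sup (f := fun i => (q i).natAbs) (Finset.mem_univ i)


lemma sliceBound (k n : ℕ) (δ : ℝ) (hδ : 0 < δ) (q : Fin (k+1) → ℤ) (i0 : Fin (k+1))
    (hq : 1 ≤ (q i0).natAbs) :
    volume {X : Fin (k+1) → Fin n → ℝ | (∀ i j, X i j ∈ Set.Icc (-(1/2):ℝ) (1/2)) ∧
        ∀ j, |∑ i, (q i : ℝ) * X i j| < δ} ≤
      ENNReal.ofReal (2*δ/((q i0).natAbs)) ^ n := by
  set r : ℝ := ((q i0).natAbs : ℝ) with hr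
  have hr1 : (1:ℝ) ≤ r := by rw [hr]; exact_mod_cast hq
  have hrpos : (0:ℝ) < r := lt_of_lt_of_le zero_lt_one hr1
  have haq : |(q i0 : ℝ)| = r := by simp [hr, Nat.cast_natAbs, Int.cast_abs]
  have hq0 : (q i0 : ℝ) ≠ 0 := by
    intro h; rw [h, abs_zero] at haq; exact hrpos.ne haq
  set B : Set (Fin (k+1) → Fin n → ℝ) :=
    {X | (∀ i j, X i j ∈ Set.Icc (-(1/2):ℝ) (1/2)) ∧ ∀ j, |∑ i, (q i : ℝ) * X i j| < δ}
    with hBdef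
  have hBmeas : MeasurableSet B := by
    have h1 : B = (⋂ i, ⋂ j, (fun X : Fin (k+1) → Fin n → ℝ => X i j) ⁻¹'
        Set.Icc (-(1/2):ℝ) (1/2)) ∩
        ⋂ j, (fun X : Fin (k+1) → Fin n → ℝ => ∑ i, (q i : ℝ) * X i j) ⁻¹'
          Set.Ioo (-δ) δ := by
      ext X
      simp only [hBdef, Set.mem_setOf_eq, Set.mem_inter_iff, Set.mem_iInter, Set.mem_preimage,
        Set.mem_Ioo, abs_lt]
    rw [h1]
    apply MeasurableSet.inter
    · exact MeasurableSet.iInter fun i => MeasurableSet.iInter fun j =>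
        ((measurable_pi_apply i).eval) measurableSet_Icc
    · exact MeasurableSet.iInter fun j =>
        (Finset.measurable_sum Finset.univ fun i _ =>
          (measurable_const.mul ((measurable_pi_apply i).eval))) measurableSet_Ioo
  set e := MeasurableEquiv.piFinSuccAbove (fun _ : Fin (k+1) => Fin n → ℝ) i0 with he
  have hmp := measurePreserving_piFinSuccAbove (fun _ : Fin (k+1) => (volume : Measure (Fin n → ℝ))) i0
  rw [show (Measure.pi fun _ : Fin (k+1) => (volume : Measure (Fin n → ℝ))) = volume from volume_pi.symm,
    show (Measure.pi fun _ : Fin k => (volume : Measure (Fin n → ℝ))) = volume from volume_pi.symm] at hmp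
  set S : Set ((Fin n → ℝ) × (Fin k → Fin n → ℝ)) := e.symm ⁻¹' B with hS
  have hSmeas : MeasurableSet S := e.symm.measurable hBmeas
  have key : volume B = (volume.prod volume) S :=
    ((hmp.symm e).measure_preimage hBmeas.nullMeasurableSet).symm
  set C : Set (Fin k → Fin n → ℝ) := {w | ∀ i j, w i j ∈ Set.Icc (-(1/2):ℝ) (1/2)} with hC
  have hCpi : C = Set.univ.pi fun _ : Fin k => Set.univ.pi fun _ : Fin n =>
      Set.Icc (-(1/2):ℝ) (1/2) := by
    ext w; simp only [hC, Set.mem_setOf_eq, Set.mem_pi, Set.mem_univ, forall_true_left, true_implies]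
  have hCmeas : MeasurableSet C := by
    rw [hCpi]
    exact MeasurableSet.univ_pi fun i => MeasurableSet.univ_pi fun j => measurableSet_Icc
  have hCvol : volume C = 1 := by
    have hinner : volume (Set.univ.pi fun _ : Fin n => Set.Icc (-(1/2):ℝ) (1/2)) = 1 := by
      rw [volume_pi_pi]
      rw [Real.volume_Icc]
      norm_num
    rw [hCpi, volume_pi_pi]
    simp only [hinner, Finset.prod_const_one]
  have hsymm : ∀ v w, e.symm (v, w) = i0.insertNth v w := by
    intro v w
    rw [he, MeasurableEquiv.piFinSuccAbove_symm_apply]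
    rfl
  have hpoint : ∀ w, volume ((fun v => (v, w)) ⁻¹' S) ≤
      C.indicator (fun _ => ENNReal.ofReal (2*δ/r) ^ n) w := by
    intro w
    by_cases hw : w ∈ C
    · rw [Set.indicator_of_mem hw]
      have hsub : (fun v => (v, w)) ⁻¹' S ⊆ Set.univ.pi fun j =>
          Metric.ball (-(∑ i : Fin k, (q (i0.succAbove i):ℝ) * w i j) / (q i0 : ℝ)) (δ / r) := by
        intro v hv
        simp only [Set.mem_preimage, hS] at hv
        rw [hsymm] at hv
        obtain ⟨-, h2⟩ := hv
        intro j _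
        have h3 := h2 j
        rw [Fin.sum_univ_succAbove _ i0] at h3
        simp only [Fin.insertNth_apply_same, Fin.insertNth_apply_succAbove] at h3
        rw [Metric.mem_ball, Real.dist_eq]
        set c := ∑ i : Fin k, (q (i0.succAbove i):ℝ) * w i j with hc
        have hdiff : v j - -c / (q i0:ℝ) = ((q i0:ℝ) * v j + c) / (q i0:ℝ) := by
          field_simp
          ring
        rw [hdiff, abs_div, haq]
        gcongr
      calc volume ((fun v => (v, w)) ⁻¹' S) ≤ _ := measure_mono hsub
        _ = ∏ j : Fin n, volume (Metric.ball
            (-(∑ i : Fin k, (q (i0.succAbove i):ℝ) * w i j) / (q i0 : ℝ)) (δ / r)) :=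
          volume_pi_pi _
        _ = ENNReal.ofReal (2*δ/r) ^ n := by
          simp [Real.volume_ball, Finset.prod_const, Finset.card_univ, mul_div_assoc]
    · rw [Set.indicator_of_notMem hw]
      have hempty : (fun v => (v, w)) ⁻¹' S = ∅ := by
        ext v
        simp only [Set.mem_preimage, hS, Set.mem_empty_iff_false, iff_false]
        rw [hsymm]
        rintro ⟨h1, -⟩
        exact hw fun i j => by
          have := h1 (i0.succAbove i) j
          rwa [Fin.insertNth_apply_succAbove] at this
      rw [hempty, measure_empty]
  calc volume B = (volume.prod volume) S := key
    _ = ∫⁻ w, volume ((fun v => (v, w)) ⁻¹' S) := Measure.prod_apply_symm hSmeas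
    _ ≤ ∫⁻ w, C.indicator (fun _ => ENNReal.ofReal (2*δ/r) ^ n) w := lintegral_mono hpoint
    _ = ENNReal.ofReal (2*δ/r) ^ n * volume C := lintegral_indicator_const hCmeas _
    _ = ENNReal.ofReal (2*δ/r) ^ n := by rw [hCvol, mul_one]

lemma shellCard (k r : ℕ) (hr : 1 ≤ r) (T : Finset (Fin (k+1) → ℤ)) :
    (T.filter fun q => qn q = r).card ≤ (k+1) * (2*(2*r+1)^k) := by
  classical
  set shellF : Fin (k+1) → Finset (Fin (k+1) → ℤ) := fun i0 =>
    Fintype.piFinset fun i => if i = i0 then ({(r:ℤ), -(r:ℤ)} : Finset ℤ)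
      else Finset.Icc (-(r:ℤ)) r with hshellF
  have hsub : (T.filter fun q => qn q = r) ⊆ Finset.univ.biUnion shellF := by
    intro q hq
    rw [Finset.mem_filter] at hq
    obtain ⟨-, hqr⟩ := hq
    obtain ⟨i0, -, hi0⟩ := Finset.exists_mem_eq_sup Finset.univ Finset.univ_nonempty
      (fun i => (q i).natAbs)
    rw [Finset.mem_biUnion]
    refine ⟨i0, Finset.mem_univ _, ?_⟩
    rw [hshellF, Fintype.mem_piFinset]
    intro i
    by_cases hii : i = i0
    · subst hii
      have hthis : (q i).natAbs = r := by rw [← hi0, ← hqr]; rfl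
      rcases Int.natAbs_eq_iff.mp hthis with h | h <;> simp [h]
    · rw [if_neg hii, Finset.mem_Icc]
      have h1 : (q i).natAbs ≤ r := hqr ▸ le_qn q i
      omega
  calc (T.filter fun q => qn q = r).card ≤ (Finset.univ.biUnion shellF).card :=
        Finset.card_le_card hsub
    _ ≤ ∑ i0, (shellF i0).card := Finset.card_biUnion_le
    _ ≤ ∑ _i0 : Fin (k+1), 2*(2*r+1)^k := by
        apply Finset.sum_le_sum
        intro i0 _
        apply le_of_eq
        rw [hshellF, Fintype.card_piFinset]
        have hc2 : ({(r:ℤ), -(r:ℤ)} : Finset ℤ).card = 2 := by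
          rw [Finset.card_insert_of_notMem (by simp; omega), Finset.card_singleton]
        have hcI : (Finset.Icc (-(r:ℤ)) r).card = 2*r+1 := by
          rw [Int.card_Icc]; omega
        calc (∏ i, (if i = i0 then ({(r:ℤ), -(r:ℤ)} : Finset ℤ)
              else Finset.Icc (-(r:ℤ)) r).card)
            = (if i0 = i0 then ({(r:ℤ), -(r:ℤ)} : Finset ℤ)
              else Finset.Icc (-(r:ℤ)) r).card *
              ∏ i ∈ Finset.univ.erase i0, (if i = i0 then ({(r:ℤ), -(r:ℤ)} : Finset ℤ)
              else Finset.Icc (-(r:ℤ)) r).card :=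
            (Finset.mul_prod_erase Finset.univ _ (Finset.mem_univ i0)).symm
          _ = 2 * (2*r+1)^k := by
            rw [if_pos rfl, hc2]
            congr 1
            rw [Finset.prod_congr rfl (fun i hi => by
              rw [if_neg (Finset.mem_erase.mp hi).1, hcI]), Finset.prod_const,
              Finset.card_erase_of_mem (Finset.mem_univ i0), Finset.card_univ,
              Fintype.card_fin, Nat.add_sub_cancel]
    _ = (k+1) * (2*(2*r+1)^k) := by
        rw [Finset.sum_const, Finset.card_univ, Fintype.card_fin, smul_eq_mul]

lemma sumBound (k n N : ℕ) (hkn : n ≤ k) (hN : 1 ≤ N) (δ : ℝ) (hδ : 0 < δ)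
    (T : Finset (Fin (k+1) → ℤ)) (hT : ∀ q ∈ T, 1 ≤ qn q ∧ qn q ≤ N) :
    ∑ q ∈ T, (2*δ/(qn q : ℝ))^n ≤ ((k+1) * 2 * 3^k * (2*δ)^n) * (N:ℝ)^((k+1)-n) := by
  classical
  have hNr : (1:ℝ) ≤ (N:ℝ) := by exact_mod_cast hN
  rw [← Finset.sum_fiberwise_of_maps_to (t := Finset.Icc 1 N)
    (fun q hq => Finset.mem_Icc.mpr (hT q hq)) (fun q => (2*δ/(qn q : ℝ))^n)]
  have hterm : ∀ r ∈ Finset.Icc 1 N,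
      (∑ q ∈ T.filter (fun q => qn q = r), (2*δ/(qn q : ℝ))^n)
        ≤ ((k+1) * 2 * 3^k * (2*δ)^n) * (N:ℝ)^(k-n) := by
    intro r hr
    rw [Finset.mem_Icc] at hr
    have hr1 : (1:ℝ) ≤ (r:ℝ) := by exact_mod_cast hr.1
    have hrpos : (0:ℝ) < r := lt_of_lt_of_le zero_lt_one hr1
    have hrN : (r:ℝ) ≤ (N:ℝ) := by exact_mod_cast hr.2
    have hconst : ∑ q ∈ T.filter (fun q => qn q = r), (2*δ/(qn q:ℝ))^n
        = ((T.filter (fun q => qn q = r)).card : ℝ) * (2*δ/(r:ℝ))^n := by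
      rw [Finset.sum_congr rfl (fun q hq => by rw [(Finset.mem_filter.mp hq).2]),
        Finset.sum_const, nsmul_eq_mul]
    rw [hconst]
    have hcard := shellCard k r hr.1 T
    have hpos1 : (0:ℝ) ≤ (2*δ/(r:ℝ))^n := by positivity
    calc ((T.filter (fun q => qn q = r)).card : ℝ) * (2*δ/(r:ℝ))^n
        ≤ (((k+1) * (2*(2*r+1)^k) : ℕ) : ℝ) * (2*δ/(r:ℝ))^n := by
          apply mul_le_mul_of_nonneg_right _ hpos1
          exact_mod_cast hcard
      _ = ((k+1) * 2 : ℝ) * ((2*(r:ℝ)+1)^k * ((2*δ)^n / (r:ℝ)^n)) := by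
          push_cast
          rw [div_pow]
          ring
      _ ≤ ((k+1) * 2 : ℝ) * ((3*(r:ℝ))^k * ((2*δ)^n / (r:ℝ)^n)) := by
          gcongr
          linarith
      _ = ((k+1) * 2 * 3^k * (2*δ)^n : ℝ) * ((r:ℝ)^k / (r:ℝ)^n) := by
          rw [mul_pow]
          ring
      _ = ((k+1) * 2 * 3^k * (2*δ)^n : ℝ) * (r:ℝ)^(k-n) := by
          rw [pow_sub₀ (r:ℝ) (ne_of_gt hrpos) hkn, div_eq_mul_inv]
      _ ≤ ((k+1) * 2 * 3^k * (2*δ)^n : ℝ) * (N:ℝ)^(k-n) := by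
          gcongr
  calc ∑ r ∈ Finset.Icc 1 N, ∑ q ∈ T.filter (fun q => qn q = r), (2*δ/(qn q : ℝ))^n
      ≤ ∑ _r ∈ Finset.Icc 1 N, ((k+1) * 2 * 3^k * (2*δ)^n) * (N:ℝ)^(k-n) :=
        Finset.sum_le_sum hterm
    _ = (N:ℝ) * (((k+1) * 2 * 3^k * (2*δ)^n) * (N:ℝ)^(k-n)) := by
        rw [Finset.sum_const, Nat.card_Icc, nsmul_eq_mul]
        norm_num
    _ = ((k+1) * 2 * 3^k * (2*δ)^n) * (N:ℝ)^((k+1)-n) := by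
        have hexp : (k+1)-n = (k-n)+1 := by omega
        rw [hexp, pow_succ]
        ring

lemma mainBound (k n : ℕ) (hn : 1 ≤ n) (hmn : n < k+1) (ω : ℕ → ℝ)
    (hωpos : ∀ t, 0 < ω t) (t : ℕ) :
    volume (Eset (k+1) n ω t) ≤
      ENNReal.ofReal (((k+1) * 2 * 3^k * (2*(k+1))^n * 2^((k+1)-n) : ℝ) *
        ω t ^ (-((((k+1):ℕ):ℝ) - n))) := by
  classical
  have hkn : n ≤ k := by omega
  set P : ℝ := (2:ℝ)^t with hPdef
  have hP : (0:ℝ) < P := by positivity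
  set R : ℝ := P / ω t with hRdef
  have hRpos : 0 < R := div_pos hP (hωpos t)
  set δ : ℝ := (((k+1):ℕ):ℝ) * P ^ (-((((k+1)):ℕ):ℝ)/(n:ℝ) + 1) with hδdef
  have hδpos : 0 < δ := by
    apply mul_pos (by positivity)
    exact Real.rpow_pos_of_pos hP _
  have hqnorm_ge : ∀ q : Fin (k+1) → ℤ, q ≠ 0 → (1:ℝ) ≤ qnorm q := by
    intro q hq0
    obtain ⟨i, hi⟩ := Function.ne_iff.mp hq0
    have h1 : (1:ℝ) ≤ |(q i : ℝ)| := by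
      have : 1 ≤ |q i| := Int.one_le_abs (by exact_mod_cast hi)
      calc (1:ℝ) ≤ (|q i| : ℝ) := by exact_mod_cast this
        _ = |(q i : ℝ)| := by push_cast; ring
    calc (1:ℝ) ≤ |(q i : ℝ)| := h1
      _ ≤ qnorm q := by
          have := norm_le_pi_norm (fun i => (q i : ℝ)) i
          rwa [Real.norm_eq_abs] at this
  by_cases hR : R ≤ 1
  · have hempty : Eset (k+1) n ω t = ∅ := by
      ext X
      simp only [Set.mem_empty_iff_false, iff_false]
      rintro ⟨-, q, hq0, hqR, -⟩
      have := hqnorm_ge q hq0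
      rw [← hRdef] at hqR
      linarith
    rw [hempty, measure_empty]
    exact zero_le
  push_neg at hR
  set N : ℕ := ⌈R⌉₊ with hNdef
  have hN1 : 1 ≤ N := Nat.one_le_ceil_iff.mpr hRpos
  have hRN : R ≤ (N:ℝ) := Nat.le_ceil R
  have hN2R : (N:ℝ) ≤ 2*R := by
    have := Nat.ceil_lt_add_one (le_of_lt hRpos)
    rw [← hNdef] at this
    linarith
  set T : Finset (Fin (k+1) → ℤ) :=
    (Fintype.piFinset fun _ : Fin (k+1) => Finset.Icc (-(N:ℤ)) (N:ℤ)).filter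
      (fun q => q ≠ 0) with hTdef
  set B : (Fin (k+1) → ℤ) → Set (Fin (k+1) → Fin n → ℝ) := fun q =>
    {X | (∀ i j, X i j ∈ Set.Icc (-(1/2):ℝ) (1/2)) ∧
      ∀ j, |∑ i, (q i : ℝ) * X i j| < δ} with hBdef
  have hcover : Eset (k+1) n ω t ⊆ ⋃ q ∈ T, B q := by
    rintro X ⟨hcube, q, hq0, hqR, hqX⟩
    rw [Set.mem_iUnion₂]
    refine ⟨q, ?_, ?_⟩
    · rw [hTdef, Finset.mem_filter, Fintype.mem_piFinset]
      refine ⟨fun i => ?_, hq0⟩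
      rw [Finset.mem_Icc]
      have h2 : |(q i : ℝ)| ≤ qnorm q := by
        have := norm_le_pi_norm (fun i => (q i : ℝ)) i
        rwa [Real.norm_eq_abs] at this
      have h3 : |(q i : ℝ)| ≤ (N:ℝ) := by
        rw [← hRdef] at hqR
        linarith
      have h4 : ((q i).natAbs : ℝ) ≤ (N:ℝ) := by
        rw [show ((q i).natAbs:ℝ) = |(q i:ℝ)| by simp [Nat.cast_natAbs, Int.cast_abs]]
        exact h3
      have h5 : (q i).natAbs ≤ N := by exact_mod_cast h4
      constructor <;> omega
    · refine ⟨hcube, fun j => ?_⟩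
      have h5 : |∑ i, (q i : ℝ) * X i j| ≤
          ‖(fun j => ∑ i, (q i : ℝ) * X i j : Fin n → ℝ)‖ := by
        have := norm_le_pi_norm (fun j => ∑ i, (q i : ℝ) * X i j : Fin n → ℝ) j
        rwa [Real.norm_eq_abs] at this
      calc |∑ i, (q i : ℝ) * X i j| ≤ _ := h5
        _ < δ := hqX
  have hqnT : ∀ q ∈ T, 1 ≤ qn q ∧ qn q ≤ N := by
    intro q hq
    rw [hTdef, Finset.mem_filter, Fintype.mem_piFinset] at hq
    obtain ⟨hmem, hq0⟩ := hq
    constructor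
    · obtain ⟨i, hi⟩ := Function.ne_iff.mp hq0
      have hi' : q i ≠ 0 := by simpa using hi
      calc 1 ≤ (q i).natAbs := by omega
        _ ≤ qn q := le_qn q i
    · apply Finset.sup_le
      intro i _
      have := hmem i
      rw [Finset.mem_Icc] at this
      omega
  have hvol : ∀ q ∈ T, volume (B q) ≤ ENNReal.ofReal ((2*δ/(qn q : ℝ))^n) := by
    intro q hq
    obtain ⟨hqn1, -⟩ := hqnT q hq
    obtain ⟨i0, -, hi0⟩ := Finset.exists_mem_eq_sup Finset.univ Finset.univ_nonempty
      (fun i => (q i).natAbs)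
    have hqi0 : (q i0).natAbs = qn q := hi0.symm
    have h1 : 1 ≤ (q i0).natAbs := by rw [hqi0]; exact hqn1
    have := sliceBound k n δ hδpos q i0 h1
    rw [hqi0] at this
    rw [ENNReal.ofReal_pow (by positivity)]
    exact this
  calc volume (Eset (k+1) n ω t) ≤ volume (⋃ q ∈ T, B q) := measure_mono hcover
    _ ≤ ∑ q ∈ T, volume (B q) := measure_biUnion_finset_le T B
    _ ≤ ∑ q ∈ T, ENNReal.ofReal ((2*δ/(qn q : ℝ))^n) := Finset.sum_le_sum hvol
    _ = ENNReal.ofReal (∑ q ∈ T, (2*δ/(qn q : ℝ))^n) :=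
        (ENNReal.ofReal_sum_of_nonneg (fun q _ => by positivity)).symm
    _ ≤ ENNReal.ofReal (((k+1) * 2 * 3^k * (2*δ)^n) * (N:ℝ)^((k+1)-n)) :=
        ENNReal.ofReal_le_ofReal (sumBound k n N hkn hN1 δ hδpos T hqnT)
    _ ≤ ENNReal.ofReal (((k+1) * 2 * 3^k * (2*(k+1))^n * 2^((k+1)-n) : ℝ) *
        ω t ^ (-((((k+1):ℕ):ℝ) - n))) := by
      apply ENNReal.ofReal_le_ofReal
      -- real arithmetic
      set u : ℕ := (k+1) - n with hu
      have hδn : δ^n = (((k+1):ℕ):ℝ)^n * P ^ ((n:ℝ) - (((k+1):ℕ):ℝ)) := by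
        rw [hδdef, mul_pow, ← Real.rpow_natCast (P ^ _) n, ← Real.rpow_mul hP.le]
        congr 2
        have hn0 : (n:ℝ) ≠ 0 := by positivity
        field_simp
        ring
      have hPinv : P ^ ((n:ℝ) - (((k+1):ℕ):ℝ)) = (P^u)⁻¹ := by
        rw [← Real.rpow_natCast P u, ← Real.rpow_neg hP.le]
        congr 1
        rw [hu]
        push_cast [Nat.cast_sub (le_of_lt hmn)]
        ring
      have hω : ω t ^ (-((((k+1):ℕ):ℝ) - n)) = ((ω t)^u)⁻¹ := by
        rw [← Real.rpow_natCast (ω t) u, ← Real.rpow_neg (hωpos t).le]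
        congr 1
        rw [hu]
        push_cast [Nat.cast_sub (le_of_lt hmn)]
        ring
      have hstep1 : (N:ℝ)^u ≤ (2*R)^u := by
        apply pow_le_pow_left₀ (by positivity) hN2R
      have hωne : ω t ≠ 0 := ne_of_gt (hωpos t)
      have hPune : P^u ≠ 0 := by positivity
      calc ((k+1) * 2 * 3^k * (2*δ)^n : ℝ) * (N:ℝ)^u
          ≤ ((k+1) * 2 * 3^k * (2*δ)^n : ℝ) * (2*R)^u := by gcongr
        _ = ((k+1) * 2 * 3^k * (2*(k+1))^n * 2^u : ℝ) * ((ω t)^u)⁻¹ := by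
            rw [mul_pow (2:ℝ) δ n, hδn, hPinv, mul_pow (2:ℝ) R u, hRdef, div_pow,
              mul_pow (2:ℝ) ((k:ℝ)+1) n]
            push_cast
            field_simp
        _ = ((k+1) * 2 * 3^k * (2*(k+1))^n * 2^u : ℝ) * ω t ^ (-((((k+1):ℕ):ℝ) - n)) := by
            rw [hω]

theorem stmt13 (m n : ℕ) (hn : 1 ≤ n) (hmn : n < m) (ω : ℕ → ℝ)
    (hω : Monotone ω) (hωpos : ∀ t, 0 < ω t) (hωtop : Tendsto ω atTop atTop) :
    (∃ c > (0 : ℝ), ∀ t : ℕ,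
        volume (Eset m n ω t) ≤ ENNReal.ofReal (c * ω t ^ (-((m : ℝ) - n)))) ∧
      Tendsto (fun t : ℕ => volume (Eset m n ω t)) atTop (nhds 0) := by
  obtain ⟨k, rfl⟩ : ∃ k, m = k + 1 := ⟨m - 1, by omega⟩
  set c : ℝ := ((k+1) * 2 * 3^k * (2*((k:ℝ)+1))^n * 2^((k+1)-n) : ℝ) with hc
  have hcpos : 0 < c := by positivity
  have hb : ∀ t, volume (Eset (k+1) n ω t) ≤
      ENNReal.ofReal (c * ω t ^ (-(((k+1:ℕ)):ℝ) + (n:ℝ))) := by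
    intro t
    have := mainBound k n hn hmn ω hωpos t
    convert this using 3 <;> push_cast <;> ring
  have hb' : ∀ t, volume (Eset (k+1) n ω t) ≤
      ENNReal.ofReal (c * ω t ^ (-(((k+1:ℕ):ℝ) - (n:ℝ)))) := by
    intro t
    have := hb t
    convert this using 4
    ring
  constructor
  · exact ⟨c, hcpos, hb'⟩
  · have h0 : 0 < ((k+1:ℕ):ℝ) - n := by
      have : (n:ℝ) < ((k+1:ℕ):ℝ) := by exact_mod_cast hmn
      linarith
    have h1 : Tendsto (fun t => ω t ^ (-(((k+1:ℕ):ℝ) - n))) atTop (nhds 0) :=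
      (tendsto_rpow_neg_atTop h0).comp hωtop
    have h2 : Tendsto (fun t => c * ω t ^ (-(((k+1:ℕ):ℝ) - n))) atTop (nhds 0) := by
      simpa using h1.const_mul c
    have h3 : Tendsto (fun t => ENNReal.ofReal (c * ω t ^ (-(((k+1:ℕ):ℝ) - n))))
        atTop (nhds 0) := by
      have := (ENNReal.continuous_ofReal.tendsto 0).comp h2
      simpa [Function.comp_def] using this
    exact tendsto_of_tendsto_of_tendsto_of_le_of_le tendsto_const_nhds h3
      (fun t => zero_le) hb'
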